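/- Each vector q^k (for k = 1,...,N), where q^k_j = min(j,k)/k, is an extreme point of the polytope Q = { q ∈ [0,1]^{N+1} : q_{j-1} ≥ ((j-1)/j) q_j for j = 1,...,N }. -/

import Mathlib

lemma split0 (lam x y : ℝ) (h0 : 0 < lam) (h1 : lam < 1) (hx : 0 ≤ x) (hy : 0 ≤ y)
    (h : lam * x + (1 - lam) * y = 0) : x = 0 ∧ y = 0 := by
  constructor <;> nlinarith [mul_nonneg h0.le hx, mul_nonneg (by linarith : (0:ℝ) ≤ 1 - lam) hy]

/-- each top-k vector q^k (q^k_j = min(j,k)/k) is an extreme point of the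
polytope Q = { q ∈ [0,1]^{N+1} : q_{j-1} ≥ ((j-1)/j) q_j, j = 1,...,N }. -/
theorem stmt3 (N : ℕ) (hN : 2 ≤ N) (k : ℕ) (hk : 1 ≤ k) (hkN : k ≤ N)
    (qk : ℕ → ℝ) (hqk : ∀ j, qk j = ((min j k : ℕ) : ℝ) / (k : ℝ)) :
    (∀ j ≤ N, 0 ≤ qk j ∧ qk j ≤ 1) ∧
    (∀ j, 1 ≤ j → j ≤ N → qk (j - 1) ≥ (((j : ℝ) - 1) / (j : ℝ)) * qk j) ∧
    (∀ a b : ℕ → ℝ,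
      (∀ j ≤ N, 0 ≤ a j ∧ a j ≤ 1) →
      (∀ j, 1 ≤ j → j ≤ N → a (j - 1) ≥ (((j : ℝ) - 1) / (j : ℝ)) * a j) →
      (∀ j ≤ N, 0 ≤ b j ∧ b j ≤ 1) →
      (∀ j, 1 ≤ j → j ≤ N → b (j - 1) ≥ (((j : ℝ) - 1) / (j : ℝ)) * b j) →
      ∀ lam : ℝ, 0 < lam → lam < 1 →
        (∀ j ≤ N, qk j = lam * a j + (1 - lam) * b j) →
        ∀ j ≤ N, a j = b j) := by
  have hk0 : (0:ℝ) < (k:ℝ) := by exact_mod_cast hk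
  refine ⟨?_, ?_, ?_⟩
  · intro j _
    rw [hqk]
    constructor
    · positivity
    · rw [div_le_one hk0]
      exact_mod_cast min_le_right j k
  · intro j h1 h2
    have hj0 : (0:ℝ) < (j:ℝ) := by exact_mod_cast h1
    rw [hqk, hqk]
    rcases le_or_gt j k with hle | hlt
    · have h1' : min (j-1) k = j - 1 := min_eq_left (le_trans (Nat.sub_le j 1) hle)
      have h2' : min j k = j := min_eq_left hle
      rw [h1', h2']
      have : ((j-1 : ℕ) : ℝ) = (j:ℝ) - 1 := by
        push_cast [Nat.cast_sub h1]; ring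
      rw [this]
      have heq : ((j:ℝ)-1)/(j:ℝ) * ((j:ℝ)/(k:ℝ)) = ((j:ℝ)-1)/(k:ℝ) := by
        field_simp
      rw [heq]
    · have h1' : min (j-1) k = k := min_eq_right (by omega)
      have h2' : min j k = k := min_eq_right hlt.le
      rw [h1', h2', div_self hk0.ne']
      have : ((j:ℝ)-1)/(j:ℝ) * 1 ≤ 1 := by
        rw [mul_one, div_le_one hj0]; linarith
      linarith
  · intro a b ha hac hb hbc lam hl0 hl1 hcomb
    -- tightness of constraints i = 1..k
    have tight : ∀ i, 1 ≤ i → i ≤ k →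
        a (i-1) = (((i:ℝ)-1)/(i:ℝ)) * a i ∧ b (i-1) = (((i:ℝ)-1)/(i:ℝ)) * b i := by
      intro i h1 h2
      have hi0 : (0:ℝ) < (i:ℝ) := by exact_mod_cast h1
      have hiN : i ≤ N := le_trans h2 hkN
      have hi1N : i - 1 ≤ N := le_trans (Nat.sub_le i 1) hiN
      have hq1 : qk (i-1) = ((i:ℝ)-1)/(k:ℝ) := by
        rw [hqk, min_eq_left (le_trans (Nat.sub_le i 1) h2)]
        push_cast [Nat.cast_sub h1]; ring
      have hq2 : qk i = (i:ℝ)/(k:ℝ) := by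
        rw [hqk, min_eq_left h2]
      have key : qk (i-1) - (((i:ℝ)-1)/(i:ℝ)) * qk i = 0 := by
        rw [hq1, hq2]; field_simp; ring
      have hxa : 0 ≤ a (i-1) - (((i:ℝ)-1)/(i:ℝ)) * a i := by
        have := hac i h1 hiN; linarith
      have hxb : 0 ≤ b (i-1) - (((i:ℝ)-1)/(i:ℝ)) * b i := by
        have := hbc i h1 hiN; linarith
      have hsum : lam * (a (i-1) - (((i:ℝ)-1)/(i:ℝ)) * a i)
          + (1 - lam) * (b (i-1) - (((i:ℝ)-1)/(i:ℝ)) * b i) = 0 := by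
        have e1 := hcomb (i-1) hi1N
        have e2 := hcomb i hiN
        have : qk (i-1) - (((i:ℝ)-1)/(i:ℝ)) * qk i
            = lam * (a (i-1) - (((i:ℝ)-1)/(i:ℝ)) * a i)
            + (1 - lam) * (b (i-1) - (((i:ℝ)-1)/(i:ℝ)) * b i) := by
          rw [e1, e2]; ring
        linarith [key, this]
      obtain ⟨ea, eb⟩ := split0 lam _ _ hl0 hl1 hxa hxb hsum
      constructor <;> linarith
    -- a k = 1, b k = 1
    have hqkk : qk k = 1 := by rw [hqk, min_self, div_self hk0.ne']
    have hak : a k = 1 ∧ b k = 1 := by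
      have e := hcomb k hkN
      have h1 := ha k hkN
      have h2 := hb k hkN
      have hsum : lam * (1 - a k) + (1 - lam) * (1 - b k) = 0 := by
        rw [hqkk] at e; linarith
      obtain ⟨ea, eb⟩ := split0 lam _ _ hl0 hl1 (by linarith [h1.2]) (by linarith [h2.2]) hsum
      constructor <;> linarith
    -- linear growth: a j = j * a 1 for 1 ≤ j ≤ k, same for b
    have lin : ∀ j, 1 ≤ j → j ≤ k → a j = (j:ℝ) * a 1 ∧ b j = (j:ℝ) * b 1 := by
      intro j h1 h2
      induction j with
      | zero => omega
      | succ n ih =>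
        rcases Nat.eq_or_lt_of_le h1 with h | h
        · constructor <;> simp [← h]
        · have hn1 : 1 ≤ n := by omega
          have hnk : n ≤ k := by omega
          obtain ⟨ea, eb⟩ := ih hn1 hnk
          have hn0 : (0:ℝ) < (n:ℝ) := by exact_mod_cast hn1
          obtain ⟨ta, tb⟩ := tight (n+1) (by omega) h2
          simp only [Nat.add_sub_cancel] at ta tb
          have hcast : ((n+1 : ℕ):ℝ) = (n:ℝ) + 1 := by push_cast; ring
          rw [hcast] at ta tb
          have hfrac : ((n:ℝ)+1-1)/((n:ℝ)+1) = (n:ℝ)/((n:ℝ)+1) := by ring_nf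
          rw [hfrac] at ta tb
          have hn10 : (0:ℝ) < (n:ℝ)+1 := by linarith
          constructor
          · have : a (n+1) = ((n:ℝ)+1)/(n:ℝ) * a n := by
              field_simp at ta ⊢; linarith
            rw [this, ea, hcast]; field_simp
          · have : b (n+1) = ((n:ℝ)+1)/(n:ℝ) * b n := by
              field_simp at tb ⊢; linarith
            rw [this, eb, hcast]; field_simp
    have ha1 : a 1 = 1/(k:ℝ) := by
      obtain ⟨e, _⟩ := lin k hk le_rfl
      rw [hak.1] at e
      field_simp
      linarith
    have hb1 : b 1 = 1/(k:ℝ) := by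
      obtain ⟨_, e⟩ := lin k hk le_rfl
      rw [hak.2] at e
      field_simp
      linarith
    -- final
    intro j hjN
    rcases le_or_gt k j with hle | hlt
    · -- qk j = 1
      have hqj : qk j = 1 := by rw [hqk, min_eq_right hle, div_self hk0.ne']
      have e := hcomb j hjN
      have h1 := ha j hjN
      have h2 := hb j hjN
      have hsum : lam * (1 - a j) + (1 - lam) * (1 - b j) = 0 := by
        rw [hqj] at e; linarith
      obtain ⟨ea, eb⟩ := split0 lam _ _ hl0 hl1 (by linarith [h1.2]) (by linarith [h2.2]) hsum
      linarith
    · rcases Nat.eq_zero_or_pos j with h0 | h1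
      · subst h0
        have hq0 : qk 0 = 0 := by
          rw [hqk]
          simp [Nat.min_eq_left (Nat.zero_le k)]
        have e := hcomb 0 (by omega)
        have h1 := ha 0 (by omega)
        have h2 := hb 0 (by omega)
        have hsum : lam * a 0 + (1 - lam) * b 0 = 0 := by rw [hq0] at e; linarith
        obtain ⟨ea, eb⟩ := split0 lam _ _ hl0 hl1 h1.1 h2.1 hsum
        linarith
      · obtain ⟨ea, eb⟩ := lin j h1 hlt.le
        rw [ea, eb, ha1, hb1]
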